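/- Let p be a prime, n and e positive integers, and define u(k) = e·ν_p(C(n,k)) + k on {1,...,n}. If i > ν_p(n), then u(p^i) > u(p^{ν_p(n)}) (whenever p^i ≤ n), and u(n) ≥ u(p^{ν_p(n)}). Consequently the minimum of u over {1,...,n} equals the minimum of u(p^i) over integers 0 ≤ i ≤ ν_p(n). -/

import Mathlib

private lemma fact_cast_eq {p m : ℕ} (hp : p.Prime) (hm : 0 < m) :
    (m.factorization p : ℕ∞) = emultiplicity p m := by
  haveI : Fact p.Prime := ⟨hp⟩
  rw [Nat.factorization_def _ hp]
  exact padicValNat_eq_emultiplicity hm.ne'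

private lemma sub_mod_of_le_mod {m n b : ℕ} (hb : b ≤ n % m) (hm : 0 < m) :
    (n - b) % m = n % m - b := by
  have hd := Nat.div_add_mod n m
  have hlt := Nat.mod_lt n hm
  rw [show n - b = m * (n / m) + (n % m - b) by omega, Nat.mul_add_mod,
    Nat.mod_eq_of_lt (by omega)]

private lemma sub_mod_of_dvd {m n b : ℕ} (hmn : m ∣ n) (hb0 : 0 < b) (hbm : b ≤ m)
    (hmn' : m ≤ n) : (n - b) % m = m - b := by
  obtain ⟨c, rfl⟩ := hmn
  have hc : 1 ≤ c := by
    rcases Nat.eq_zero_or_pos c with h | h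
    · subst h; omega
    · exact h
  obtain ⟨d, rfl⟩ : ∃ d, c = d + 1 := ⟨c - 1, by omega⟩
  have hmd : m * (d + 1) = m * d + m := by ring
  rw [show m * (d + 1) - b = m * d + (m - b) by omega, Nat.mul_add_mod,
    Nat.mod_eq_of_lt (by omega)]

private lemma key_fact {p n : ℕ} (hp : p.Prime) (hn : 0 < n) {i : ℕ}
    (hi : i ≤ n.factorization p) :
    (n.choose (p ^ i)).factorization p = n.factorization p - i := by
  set ν := n.factorization p with hν
  have hpν : p ^ ν ∣ n := Nat.ordProj_dvd n p
  have hpνn : p ^ ν ≤ n := Nat.le_of_dvd hn hpν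
  have hpin : p ^ i ≤ n := le_trans (Nat.pow_le_pow_right hp.one_lt.le hi) hpνn
  have hνlog : ν ≤ Nat.log p n := (Nat.le_log_iff_pow_le hp.one_lt hn.ne').2 hpνn
  have hset : {j ∈ Finset.Ico 1 (Nat.log p n + 1) |
      p ^ j ≤ p ^ i % p ^ j + (n - p ^ i) % p ^ j} = Finset.Ioc i ν := by
    ext j
    simp only [Finset.mem_filter, Finset.mem_Ico, Finset.mem_Ioc]
    constructor
    · rintro ⟨⟨hj1, hjb⟩, hcond⟩
      by_contra hcon
      push_neg at hcon
      rcases le_or_gt j i with hji | hij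
      · have h1 : p ^ i % p ^ j = 0 :=
          Nat.mod_eq_zero_of_dvd (pow_dvd_pow p hji)
        have h2 : (n - p ^ i) % p ^ j = 0 :=
          Nat.mod_eq_zero_of_dvd
            (Nat.dvd_sub (dvd_trans (pow_dvd_pow p (le_trans hji hi)) hpν)
              (pow_dvd_pow p hji))
        rw [h1, h2] at hcond
        have := pow_pos hp.pos j
        omega
      · have hνj : ν < j := hcon hij
        have hr : p ^ ν ∣ n % p ^ j := (Nat.dvd_mod_iff (pow_dvd_pow p hνj.le)).2 hpν
        have hrne : n % p ^ j ≠ 0 := by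
          intro h0
          have hd : p ^ j ∣ n := Nat.dvd_of_mod_eq_zero h0
          have := (Nat.Prime.pow_dvd_iff_le_factorization hp hn.ne').1 hd
          omega
        have hrν : p ^ ν ≤ n % p ^ j := Nat.le_of_dvd (Nat.pos_of_ne_zero hrne) hr
        have hpi_le : p ^ i ≤ n % p ^ j :=
          le_trans (Nat.pow_le_pow_right hp.one_lt.le hi) hrν
        have hmlt : n % p ^ j < p ^ j := Nat.mod_lt n (pow_pos hp.pos j)
        have h1 : p ^ i % p ^ j = p ^ i := Nat.mod_eq_of_lt (lt_of_le_of_lt hpi_le hmlt)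
        have h2 : (n - p ^ i) % p ^ j = n % p ^ j - p ^ i :=
          sub_mod_of_le_mod hpi_le (pow_pos hp.pos j)
        rw [h1, h2] at hcond
        omega
    · rintro ⟨hij, hjν⟩
      refine ⟨⟨by omega, by omega⟩, ?_⟩
      have hlt : p ^ i < p ^ j := Nat.pow_lt_pow_right hp.one_lt hij
      have h1 : p ^ i % p ^ j = p ^ i := Nat.mod_eq_of_lt hlt
      have hdvd : p ^ j ∣ n := dvd_trans (pow_dvd_pow p hjν) hpν
      have h2 : (n - p ^ i) % p ^ j = p ^ j - p ^ i :=
        sub_mod_of_dvd hdvd (pow_pos hp.pos i) hlt.le (Nat.le_of_dvd hn hdvd)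
      rw [h1, h2]
      omega
  have hcast := fact_cast_eq hp (Nat.choose_pos hpin)
  rw [hp.emultiplicity_choose hpin (lt_add_one _), hset] at hcast
  have : (n.choose (p ^ i)).factorization p = (Finset.Ioc i ν).card := by exact_mod_cast hcast
  rw [this, Nat.card_Ioc]

private lemma lower_fact {p n k : ℕ} (hp : p.Prime) (hn : 0 < n) (hk : 0 < k) (hkn : k ≤ n) :
    n.factorization p ≤ (n.choose k).factorization p + k.factorization p := by
  have h := Nat.Prime.emultiplicity_le_emultiplicity_choose_add hp n k
  rw [← fact_cast_eq hp hn, ← fact_cast_eq hp (Nat.choose_pos hkn), ← fact_cast_eq hp hk] at h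
  exact_mod_cast h

/-- For `p` prime, `n, e` positive, and `u(k) = e·ν_p(C(n,k)) + k` on `{1,…,n}`:
if `i > ν_p(n)` and `p^i ≤ n` then `u(p^i) > u(p^{ν_p(n)})`; moreover `u(n) ≥ u(p^{ν_p(n)})`;
consequently the minimum of `u` over `{1,…,n}` equals the minimum of `u(p^i)` over
`0 ≤ i ≤ ν_p(n)`. -/
theorem stmt_4 (p n e : ℕ) (hp : p.Prime) (hn : 0 < n) (he : 0 < e) :
    (∀ i : ℕ, n.factorization p < i → p ^ i ≤ n →
        e * ((n.choose (p ^ (n.factorization p))).factorization p) + p ^ (n.factorization p)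
          < e * ((n.choose (p ^ i)).factorization p) + p ^ i) ∧
    (e * ((n.choose (p ^ (n.factorization p))).factorization p) + p ^ (n.factorization p)
        ≤ e * ((n.choose n).factorization p) + n) ∧
    sInf ((fun k => e * ((n.choose k).factorization p) + k) '' Set.Icc 1 n)
      = sInf ((fun i => e * ((n.choose (p ^ i)).factorization p) + p ^ i) ''
          Set.Icc 0 (n.factorization p)) := by
  set ν := n.factorization p with hν
  have hK0 : (n.choose (p ^ ν)).factorization p = 0 := by
    rw [key_fact hp hn le_rfl]; omega
  have hpνn : p ^ ν ≤ n := Nat.le_of_dvd hn (Nat.ordProj_dvd n p)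
  refine ⟨?_, ?_, ?_⟩
  · intro i hi hin
    rw [hK0]
    have hlt : p ^ ν < p ^ i := Nat.pow_lt_pow_right hp.one_lt hi
    simp only [mul_zero, zero_add]
    exact lt_of_lt_of_le hlt (Nat.le_add_left _ _)
  · rw [hK0, Nat.choose_self]
    simp only [Nat.factorization_one, Finsupp.coe_zero, Pi.zero_apply, mul_zero, zero_add]
    exact hpνn
  · apply le_antisymm
    · have hTne : ((fun i => e * ((n.choose (p ^ i)).factorization p) + p ^ i) ''
          Set.Icc 0 ν).Nonempty := ⟨_, ⟨ν, ⟨Nat.zero_le _, le_rfl⟩, rfl⟩⟩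
      apply le_csInf hTne
      rintro x ⟨i, ⟨-, hiν⟩, rfl⟩
      apply csInf_le (OrderBot.bddBelow _)
      exact ⟨p ^ i, ⟨Nat.one_le_iff_ne_zero.2 (pow_pos hp.pos i).ne',
        le_trans (Nat.pow_le_pow_right hp.one_lt.le hiν) hpνn⟩, rfl⟩
    · have hSne : ((fun k => e * ((n.choose k).factorization p) + k) ''
          Set.Icc 1 n).Nonempty := ⟨_, ⟨n, ⟨hn, le_rfl⟩, rfl⟩⟩
      obtain ⟨k, ⟨hk1, hkn⟩, hfk⟩ := Nat.sInf_mem hSne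
      rw [← hfk]
      set j := k.factorization p with hj
      have hk0 : 0 < k := hk1
      have hpj : p ^ j ≤ k := Nat.le_of_dvd hk0 (Nat.ordProj_dvd k p)
      rcases le_or_gt ν j with hνj | hjν
      · calc sInf ((fun i => e * ((n.choose (p ^ i)).factorization p) + p ^ i) ''
            Set.Icc 0 ν)
            ≤ e * ((n.choose (p ^ ν)).factorization p) + p ^ ν :=
              csInf_le (OrderBot.bddBelow _) ⟨ν, ⟨Nat.zero_le _, le_rfl⟩, rfl⟩
          _ = p ^ ν := by rw [hK0]; ring
          _ ≤ k := le_trans (le_trans (Nat.pow_le_pow_right hp.one_lt.le hνj) hpj) le_rfl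
          _ ≤ e * ((n.choose k).factorization p) + k := Nat.le_add_left _ _
      · have hlow := lower_fact hp hn hk0 hkn
        calc sInf ((fun i => e * ((n.choose (p ^ i)).factorization p) + p ^ i) ''
            Set.Icc 0 ν)
            ≤ e * ((n.choose (p ^ j)).factorization p) + p ^ j :=
              csInf_le (OrderBot.bddBelow _) ⟨j, ⟨Nat.zero_le _, hjν.le⟩, rfl⟩
          _ = e * (ν - j) + p ^ j := by rw [key_fact hp hn hjν.le]
          _ ≤ e * ((n.choose k).factorization p) + k := by
              have h1 : ν - j ≤ (n.choose k).factorization p := by omega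
              exact Nat.add_le_add (Nat.mul_le_mul_left e h1) hpj
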